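/- Let B be a torsion abelian group such that for every prime number ℓ the ℓ-torsion subgroup B[ℓ] = {b ∈ B : ℓ·b = 0} is finite. Then every quotient group B/A of B which has finite exponent (i.e., is annihilated by some positive integer n) is finite. -/

import Mathlib

private def nsmulHom (G : Type*) [AddCommGroup G] (n : ℕ) : G →+ G where
  toFun g := n • g
  map_zero' := smul_zero n
  map_add' a b := smul_add n a b

@[simp] private theorem nsmulHom_apply {G : Type*} [AddCommGroup G] (n : ℕ) (g : G) :
    nsmulHom G n g = n • g := rfl

private theorem finite_of_ker_range {G H : Type*} [AddCommGroup G] [AddCommGroup H]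
    (f : G →+ H) (h1 : Finite f.ker) (h2 : Finite f.range) : Finite G := by
  have e2 : (G ⧸ f.ker) ≃ f.range := (QuotientAddGroup.quotientKerEquivRange f).toEquiv
  have : Finite (G ⧸ f.ker) := Finite.of_equiv _ e2.symm
  exact Finite.of_equiv _ (AddSubgroup.addGroupEquivQuotientProdAddSubgroup (s := f.ker)).symm

private theorem card_quot_range {G : Type*} [AddCommGroup G] [Finite G] (f : G →+ G) :
    Nat.card (G ⧸ f.range) = Nat.card f.ker := by
  have h1 := AddSubgroup.card_eq_card_quotient_mul_card_addSubgroup (s := f.ker)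
  have h2 := AddSubgroup.card_eq_card_quotient_mul_card_addSubgroup (s := f.range)
  have h3 : Nat.card (G ⧸ f.ker) = Nat.card f.range :=
    Nat.card_congr (QuotientAddGroup.quotientKerEquivRange f).toEquiv
  have hpos : 0 < Nat.card f.range := Nat.card_pos
  have h4 := h1.symm.trans h2
  rw [h3, mul_comm] at h4
  exact (Nat.eq_of_mul_eq_mul_right hpos h4).symm

private theorem tors_finite {G : Type*} [AddCommGroup G]
    (hfin : ∀ ℓ : ℕ, ℓ.Prime → {g : G | ℓ • g = 0}.Finite) :
    ∀ M : ℕ, 0 < M → {g : G | M • g = 0}.Finite := by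
  intro M
  induction M using Nat.strong_induction_on with
  | _ M ih =>
  intro hM
  rcases eq_or_lt_of_le (show 1 ≤ M from hM) with h1 | h2
  · have hs : {g : G | M • g = 0} = {0} := by
      ext g
      simp [← h1]
    rw [hs]; exact Set.finite_singleton 0
  · set p := M.minFac with hpdef
    have hpprime : p.Prime := Nat.minFac_prime (by omega)
    set m := M / p with hmdef
    have hpm : p * m = M := Nat.mul_div_cancel' (Nat.minFac_dvd M)
    have hp2 : 2 ≤ p := hpprime.two_le
    have hm0 : 0 < m := Nat.pos_of_ne_zero (by
      intro h; rw [h, mul_zero] at hpm; omega)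
    have hmM : m < M := by nlinarith
    have hK : Finite (nsmulHom G M).ker := by
      apply finite_of_ker_range ((nsmulHom G m).comp (nsmulHom G M).ker.subtype)
      · haveI := (ih m hmM hm0).to_subtype
        apply Finite.of_injective
          (f := fun x : ((nsmulHom G m).comp (nsmulHom G M).ker.subtype).ker =>
            (⟨(x.1 : G), show m • ((x.1 : (nsmulHom G M).ker) : G) = 0 from AddMonoidHom.mem_ker.mp x.2⟩ : {g : G | m • g = 0}))
        intro a b h
        simp only [Subtype.mk.injEq] at h
        exact Subtype.ext (Subtype.ext h)
      · haveI := (hfin p hpprime).to_subtype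
        apply Finite.of_injective
          (f := fun x : ((nsmulHom G m).comp (nsmulHom G M).ker.subtype).range =>
            (⟨(x.1 : G), by
              obtain ⟨k, hk⟩ := x.2
              have hk2 : m • (k : G) = x.1 := hk
              have hkK : M • (k : G) = 0 := k.2
              show p • (x.1 : G) = 0
              rw [← hk2, smul_smul, hpm, hkK]⟩ : {g : G | p • g = 0}))
        intro a b h
        simp only [Subtype.mk.injEq] at h
        exact Subtype.ext h
    have hset : {g : G | M • g = 0} = ((nsmulHom G M).ker : Set G) := by
      ext g; simp [AddMonoidHom.mem_ker]
    rw [hset]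
    exact Set.finite_coe_iff.mp hK

private theorem quot_prime_finite {G : Type*} [AddCommGroup G]
    (htors : ∀ g : G, ∃ n : ℕ, 0 < n ∧ n • g = 0)
    (hfin : ∀ ℓ : ℕ, ℓ.Prime → {g : G | ℓ • g = 0}.Finite)
    (p : ℕ) (hp : p.Prime) : Finite (G ⧸ (nsmulHom G p).range) := by
  by_contra hinf
  rw [not_finite_iff_infinite] at hinf
  set N := Nat.card {g : G | p • g = 0} with hN
  let emb : Fin (N + 1) ↪ G ⧸ (nsmulHom G p).range :=
    Fin.valEmbedding.trans (Infinite.natEmbedding _)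
  set b : Fin (N + 1) → G := fun i => (emb i).out with hb
  have hout : ∀ i, (QuotientAddGroup.mk (b i) : G ⧸ (nsmulHom G p).range) = emb i :=
    fun i => QuotientAddGroup.out_eq' (emb i)
  choose nn hn1 hn2 using fun i => htors (b i)
  set M : ℕ := ∏ i, nn i with hM
  have hM0 : 0 < M := Finset.prod_pos fun i _ => hn1 i
  have hMb : ∀ i, M • b i = 0 := by
    intro i
    obtain ⟨c, hc⟩ := Finset.dvd_prod_of_mem nn (Finset.mem_univ i)
    rw [hM, hc, mul_comm, ← smul_smul, hn2 i, smul_zero]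
  set K := (nsmulHom G M).ker with hK
  haveI hKfin : Finite K := by
    haveI := (tors_finite hfin M hM0).to_subtype
    apply Finite.of_injective
      (f := fun x : K => (⟨(x : G), AddMonoidHom.mem_ker.mp x.2⟩ : {g : G | M • g = 0}))
    intro a c h
    simp only [Subtype.mk.injEq] at h
    exact Subtype.ext (congrArg Subtype.val h)
  let f : K →+ G ⧸ (nsmulHom G p).range :=
    (QuotientAddGroup.mk' _).comp K.subtype
  haveI : Finite (K ⧸ f.ker) := Quotient.finite _
  haveI hrfin : Finite f.range :=
    Finite.of_equiv _ (QuotientAddGroup.quotientKerEquivRange f).toEquiv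
  have hle0 : Nat.card f.range = Nat.card (K ⧸ f.ker) :=
    Nat.card_congr (QuotientAddGroup.quotientKerEquivRange f).toEquiv.symm
  have hsub : (nsmulHom K p).range ≤ f.ker.comap (AddMonoidHom.id K) := by
    rintro x ⟨y, rfl⟩
    rw [AddSubgroup.mem_comap]
    rw [AddMonoidHom.mem_ker]
    have h1 : f (AddMonoidHom.id K (nsmulHom K p y)) =
        QuotientAddGroup.mk (p • (y : G)) := by
      simp [f]
    rw [h1, QuotientAddGroup.eq_zero_iff]
    exact ⟨(y : G), rfl⟩
  have hle2 : Nat.card (K ⧸ f.ker) ≤ Nat.card (K ⧸ (nsmulHom K p).range) := by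
    apply Nat.card_le_card_of_surjective
      (QuotientAddGroup.map (nsmulHom K p).range f.ker (AddMonoidHom.id K) hsub)
    intro x
    refine QuotientAddGroup.induction_on x fun y => ?_
    exact ⟨QuotientAddGroup.mk y, by simp [QuotientAddGroup.map_mk]⟩
  have hle3 : Nat.card (K ⧸ (nsmulHom K p).range) = Nat.card (nsmulHom K p).ker :=
    card_quot_range _
  have hle4 : Nat.card (nsmulHom K p).ker ≤ N := by
    haveI := (hfin p hp).to_subtype
    apply Nat.card_le_card_of_injective
      (f := fun x : (nsmulHom K p).ker => (⟨((x : K) : G), by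
        have h1 : p • (x : K) = 0 := AddMonoidHom.mem_ker.mp x.2
        show p • K.subtype (x : K) = 0
        rw [← map_nsmul, h1, map_zero]⟩ : {g : G | p • g = 0}))
    intro a c h
    simp only [Subtype.mk.injEq] at h
    exact Subtype.ext (Subtype.ext h)
  have hge : N + 1 ≤ Nat.card f.range := by
    have hinj : Function.Injective (fun i : Fin (N + 1) =>
        (⟨emb i, ⟨⟨b i, AddMonoidHom.mem_ker.mpr (hMb i)⟩, hout i⟩⟩ : f.range)) := by
      intro i j h
      simp only [Subtype.mk.injEq] at h
      exact emb.injective (congrArg Subtype.val h)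
    have := Nat.card_le_card_of_injective _ hinj
    simpa using this
  omega

private theorem quot_smul_finite {G : Type*} [AddCommGroup G]
    (htors : ∀ g : G, ∃ n : ℕ, 0 < n ∧ n • g = 0)
    (hfin : ∀ ℓ : ℕ, ℓ.Prime → {g : G | ℓ • g = 0}.Finite) :
    ∀ n : ℕ, 0 < n → Finite (G ⧸ (nsmulHom G n).range) := by
  intro n
  induction n using Nat.strong_induction_on with
  | _ n ih =>
  intro hn
  rcases eq_or_lt_of_le (show 1 ≤ n from hn) with h1 | h2
  · have htop : (nsmulHom G n).range = ⊤ := by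
      rw [AddSubgroup.eq_top_iff']
      intro g
      exact ⟨g, by simp [← h1]⟩
    rw [htop]
    haveI := QuotientAddGroup.subsingleton_quotient_top (G := G)
    exact Finite.of_subsingleton
  · set p := n.minFac with hpdef
    have hpprime : p.Prime := Nat.minFac_prime (by omega)
    set m := n / p with hmdef
    have hpm : p * m = n := Nat.mul_div_cancel' (Nat.minFac_dvd n)
    have hp2 : 2 ≤ p := hpprime.two_le
    have hm0 : 0 < m := Nat.pos_of_ne_zero (by
      intro h; rw [h, mul_zero] at hpm; omega)
    have hmn : m < n := by nlinarith
    have hsub : (nsmulHom G n).range ≤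
        ((nsmulHom G m).range).comap (AddMonoidHom.id G) := by
      rintro x ⟨y, rfl⟩
      rw [AddSubgroup.mem_comap]
      exact ⟨p • y, by simp [smul_smul, mul_comm m p, hpm]⟩
    set θ : (G ⧸ (nsmulHom G n).range) →+ (G ⧸ (nsmulHom G m).range) :=
      QuotientAddGroup.map _ _ (AddMonoidHom.id G) hsub with hθ
    apply finite_of_ker_range θ
    · -- kernel of θ is finite
      set ψ : G →+ (G ⧸ (nsmulHom G n).range) :=
        (QuotientAddGroup.mk' _).comp (nsmulHom G m) with hψ
    
      have hker : θ.ker = ψ.range := by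
        ext x
        refine QuotientAddGroup.induction_on x fun g => ?_
        constructor
        · intro hx
          rw [AddMonoidHom.mem_ker] at hx
          have hx2 : (QuotientAddGroup.mk g : G ⧸ (nsmulHom G m).range) = 0 := by
            simpa [hθ, QuotientAddGroup.map_mk] using hx
          rw [QuotientAddGroup.eq_zero_iff] at hx2
          obtain ⟨c, hc⟩ := hx2
          exact ⟨c, by rw [hψ]; exact congrArg QuotientAddGroup.mk hc⟩
        · rintro ⟨c, hc⟩
          rw [AddMonoidHom.mem_ker, ← hc]
          have hc2 : θ (ψ c) = QuotientAddGroup.mk (m • c) := by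
            simp [hθ, hψ, QuotientAddGroup.map_mk]
          rw [hc2, QuotientAddGroup.eq_zero_iff]
          exact ⟨c, rfl⟩
      rw [hker]
      -- range ψ is finite since ψ factors through G ⧸ pG
      have hψp : ∀ x ∈ (nsmulHom G p).range, ψ x = 0 := by
        rintro x ⟨y, rfl⟩
        have : ψ ((nsmulHom G p) y) = QuotientAddGroup.mk (m • p • y) := rfl
        rw [this, QuotientAddGroup.eq_zero_iff]
        exact ⟨y, by simp [smul_smul, mul_comm m p, hpm]⟩
      have hψker : (nsmulHom G p).range ≤ ψ.ker := fun x hx =>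
        AddMonoidHom.mem_ker.mpr (hψp x hx)
      set φ := QuotientAddGroup.lift (nsmulHom G p).range ψ hψker with hφ
      have hrange : ψ.range = φ.range := by
        ext x
        constructor
        · rintro ⟨c, rfl⟩
          exact ⟨QuotientAddGroup.mk c, by simp [hφ]⟩
        · rintro ⟨c, rfl⟩
          refine QuotientAddGroup.induction_on c fun g => ?_
          exact ⟨g, by simp [hφ]⟩
      rw [hrange]
      haveI : Finite (G ⧸ (nsmulHom G p).range) :=
        quot_prime_finite htors hfin p hpprime
      exact Finite.of_surjective φ.rangeRestrict φ.rangeRestrict_surjective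
    · -- range of θ is finite
      haveI : Finite (G ⧸ (nsmulHom G m).range) := ih m hmn hm0
      exact inferInstance

/-- Let `B` be a torsion abelian group whose `ℓ`-torsion subgroup `B[ℓ]`
is finite for every prime `ℓ`. Then every quotient `B ⧸ A` of `B` of finite exponent
is finite. -/
theorem stmt_2 (B : Type) [AddCommGroup B]
    (htors : ∀ b : B, ∃ n : ℕ, 0 < n ∧ n • b = 0)
    (hfin : ∀ ℓ : ℕ, ℓ.Prime → {b : B | ℓ • b = 0}.Finite)
    (A : AddSubgroup B) (n : ℕ) (hn : 0 < n)
    (hA : ∀ x : B ⧸ A, n • x = 0) :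
    Finite (B ⧸ A) := by
  haveI : Finite (B ⧸ (nsmulHom B n).range) := quot_smul_finite htors hfin n hn
  have hsub : (nsmulHom B n).range ≤ A.comap (AddMonoidHom.id B) := by
    rintro x ⟨y, rfl⟩
    rw [AddSubgroup.mem_comap]
    show n • y ∈ A
    have h1 : (QuotientAddGroup.mk (n • y) : B ⧸ A) = 0 := by
      have h2 : (QuotientAddGroup.mk (n • y) : B ⧸ A)
          = n • (QuotientAddGroup.mk y : B ⧸ A) :=
        map_nsmul (QuotientAddGroup.mk' A) n y
      rw [h2]
      exact hA _
    rwa [QuotientAddGroup.eq_zero_iff] at h1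
  apply Finite.of_surjective (QuotientAddGroup.map _ A (AddMonoidHom.id B) hsub)
  intro x
  refine QuotientAddGroup.induction_on x fun g => ?_
  exact ⟨QuotientAddGroup.mk g, by simp [QuotientAddGroup.map_mk]⟩
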